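/- Let η ∈ M₂(ℤ) be primitive with det(η) ≠ 0, and let K ≥ 1 be an integer dividing det(η). Then the number of θ ∈ M₂(ℤ/Kℤ) with η·θ ≡ 0 (mod K) is exactly K². -/

import Mathlib

open Matrix

section KerEquiv
variable {R : Type*} [CommRing R]

/-- If a 2×2 matrix has zero determinant and some unit entry, its kernel is
parametrized by `R`. -/
noncomputable def kerEquivAux (A : Matrix (Fin 2) (Fin 2) R)
    (hdet : A.det = 0) (i j : Fin 2) (hu : IsUnit (A i j)) :
    {v : Fin 2 → R // A.mulVec v = 0} ≃ R where
  toFun v := -((↑hu.unit⁻¹ : R) * v.1 (j + 1))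
  invFun t := ⟨fun k => if k = j then A i (j + 1) * t else -(A i j * t), by
    have hd : A 0 0 * A 1 1 - A 0 1 * A 1 0 = 0 := by
      rw [← Matrix.det_fin_two]; exact hdet
    funext r
    rcases (by omega : i = 0 ∨ i = 1) with rfl | rfl <;>
    rcases (by omega : j = 0 ∨ j = 1) with rfl | rfl <;>
    rcases (by omega : r = 0 ∨ r = 1) with rfl | rfl <;>
      simp [Matrix.mulVec, dotProduct, Fin.sum_univ_two,
        show (1 + 1 : Fin 2) = 0 from rfl, show (0 + 1 : Fin 2) = 1 from rfl] <;>
      first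
        | ring1
        | linear_combination t * hd
        | linear_combination (-t) * hd⟩
  left_inv := by
    rintro ⟨v, hv⟩
    have hinv : (↑hu.unit⁻¹ : R) * A i j = 1 := by
      nth_rewrite 2 [← hu.unit_spec]
      exact Units.inv_mul _
    have h := congrFun hv i
    simp only [Matrix.mulVec, dotProduct, Fin.sum_univ_two, Pi.zero_apply] at h
    ext k
    simp only
    rcases (by omega : j = 0 ∨ j = 1) with rfl | rfl <;>
    rcases (by omega : k = 0 ∨ k = 1) with rfl | rfl <;>
      simp [show (1 + 1 : Fin 2) = 0 from rfl, show (0 + 1 : Fin 2) = 1 from rfl,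
        show (0 : Fin 2) ≠ 1 from by decide, show (1 : Fin 2) ≠ 0 from by decide] <;>
      first
        | linear_combination (-(↑hu.unit⁻¹ : R)) * h + (v 0) * hinv
        | linear_combination (-(↑hu.unit⁻¹ : R)) * h + (v 1) * hinv
        | linear_combination (v 0) * hinv
        | linear_combination (v 1) * hinv
  right_inv t := by
    have hj : j + 1 ≠ j := by omega
    have hinv : (↑hu.unit⁻¹ : R) * A i j = 1 := by
      nth_rewrite 2 [← hu.unit_spec]
      exact Units.inv_mul _
    simp only [hj, if_false]
    linear_combination t * hinv

end KerEquiv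

section Columns
variable {R : Type*} [CommRing R]

/-- A right-annihilating matrix is a pair of kernel columns. -/
def matKerEquiv (A : Matrix (Fin 2) (Fin 2) R) :
    {θ : Matrix (Fin 2) (Fin 2) R // A * θ = 0} ≃
      ({v : Fin 2 → R // A.mulVec v = 0} × {v : Fin 2 → R // A.mulVec v = 0}) where
  toFun θ :=
    (⟨fun r => θ.1 r 0, by
        funext r
        have := congrFun (congrFun θ.2 r) 0
        simpa [Matrix.mulVec, dotProduct, Matrix.mul_apply] using this⟩,
     ⟨fun r => θ.1 r 1, by
        funext r
        have := congrFun (congrFun θ.2 r) 1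
        simpa [Matrix.mulVec, dotProduct, Matrix.mul_apply] using this⟩)
  invFun p :=
    ⟨Matrix.of fun r c => if c = 0 then p.1.1 r else p.2.1 r, by
      funext r c
      rcases (by omega : c = 0 ∨ c = 1) with rfl | rfl
      · have := congrFun p.1.2 r
        simpa [Matrix.mulVec, dotProduct, Matrix.mul_apply] using this
      · have := congrFun p.2.2 r
        simpa [Matrix.mulVec, dotProduct, Matrix.mul_apply] using this⟩
  left_inv θ := by
    ext r c
    rcases (by omega : c = 0 ∨ c = 1) with rfl | rfl <;> simp
  right_inv p := by
    ext r <;> simp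

lemma card_matKer (A : Matrix (Fin 2) (Fin 2) R)
    (hdet : A.det = 0) (i j : Fin 2) (hu : IsUnit (A i j)) :
    Nat.card {θ : Matrix (Fin 2) (Fin 2) R // A * θ = 0} = Nat.card R ^ 2 := by
  rw [Nat.card_congr (matKerEquiv A), Nat.card_prod,
    Nat.card_congr (kerEquivAux A hdet i j hu), sq]

end Columns

section CRT

/-- Splitting the annihilator condition along the Chinese remainder theorem. -/
noncomputable def crtEquiv (η : Matrix (Fin 2) (Fin 2) ℤ) (m n : ℕ) (h : m.Coprime n) :
    {θ : Matrix (Fin 2) (Fin 2) (ZMod (m * n)) //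
        (η.map (Int.cast : ℤ → ZMod (m * n))) * θ = 0} ≃
      ({θ : Matrix (Fin 2) (Fin 2) (ZMod m) // (η.map (Int.cast : ℤ → ZMod m)) * θ = 0} ×
       {θ : Matrix (Fin 2) (Fin 2) (ZMod n) // (η.map (Int.cast : ℤ → ZMod n)) * θ = 0}) := by
  classical
  let e : ZMod (m * n) ≃+* ZMod m × ZMod n := ZMod.chineseRemainder h
  let f1 : ZMod (m * n) →+* ZMod m := (RingHom.fst (ZMod m) (ZMod n)).comp e.toRingHom
  let f2 : ZMod (m * n) →+* ZMod n := (RingHom.snd (ZMod m) (ZMod n)).comp e.toRingHom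
  have key1 : ∀ θ : Matrix (Fin 2) (Fin 2) (ZMod (m * n)),
      ((η.map (Int.cast : ℤ → ZMod (m * n))) * θ).map f1 =
        (η.map (Int.cast : ℤ → ZMod m)) * (θ.map f1) := by
    intro θ
    rw [Matrix.map_mul, Matrix.map_map]
    congr 1
    funext r c
    simp [Matrix.map_apply, map_intCast]
  have key2 : ∀ θ : Matrix (Fin 2) (Fin 2) (ZMod (m * n)),
      ((η.map (Int.cast : ℤ → ZMod (m * n))) * θ).map f2 =
        (η.map (Int.cast : ℤ → ZMod n)) * (θ.map f2) := by
    intro θ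
    rw [Matrix.map_mul, Matrix.map_map]
    congr 1
    funext r c
    simp [Matrix.map_apply, map_intCast]
  exact
  { toFun := fun θ =>
      (⟨θ.1.map f1, by rw [← key1, θ.2]; ext r c; simp [Matrix.map_apply]⟩,
       ⟨θ.1.map f2, by rw [← key2, θ.2]; ext r c; simp [Matrix.map_apply]⟩)
    invFun := fun p =>
      ⟨Matrix.of fun r c => e.symm (p.1.1 r c, p.2.1 r c), by
        have hm1 : (Matrix.of fun r c => e.symm (p.1.1 r c, p.2.1 r c)).map f1 = p.1.1 := by
          ext r c
          show (e (e.symm (p.1.1 r c, p.2.1 r c))).1 = _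
          rw [RingEquiv.apply_symm_apply]
        have hm2 : (Matrix.of fun r c => e.symm (p.1.1 r c, p.2.1 r c)).map f2 = p.2.1 := by
          ext r c
          show (e (e.symm (p.1.1 r c, p.2.1 r c))).2 = _
          rw [RingEquiv.apply_symm_apply]
        ext r c
        apply e.injective
        simp only [Matrix.zero_apply, map_zero]
        have h1 := congrFun (congrFun (by rw [key1, hm1, p.1.2]
          : ((η.map (Int.cast : ℤ → ZMod (m * n))) *
              (Matrix.of fun r c => e.symm (p.1.1 r c, p.2.1 r c))).map f1 = 0) r) c
        have h2 := congrFun (congrFun (by rw [key2, hm2, p.2.2]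
          : ((η.map (Int.cast : ℤ → ZMod (m * n))) *
              (Matrix.of fun r c => e.symm (p.1.1 r c, p.2.1 r c))).map f2 = 0) r) c
        simp only [Matrix.map_apply, Matrix.zero_apply] at h1 h2
        exact Prod.ext h1 h2⟩
    left_inv := fun θ => by
      ext r c
      show e.symm (f1 (θ.1 r c), f2 (θ.1 r c)) = θ.1 r c
      exact e.symm_apply_apply _
    right_inv := fun p => by
      refine Prod.ext (Subtype.ext ?_) (Subtype.ext ?_) <;> ext r c
      · show (e (e.symm (p.1.1 r c, p.2.1 r c))).1 = _
        rw [RingEquiv.apply_symm_apply]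
      · show (e (e.symm (p.1.1 r c, p.2.1 r c))).2 = _
        rw [RingEquiv.apply_symm_apply] }

end CRT

lemma isUnit_int_cast_of_not_dvd (p : ℕ) (hp : p.Prime) (n : ℕ) (a : ℤ)
    (ha : ¬ (p : ℤ) ∣ a) : IsUnit ((a : ZMod (p ^ n))) := by
  have hnd : ¬ p ∣ a.natAbs := by
    intro hd
    exact ha ((Int.natCast_dvd_natCast.mpr hd).trans (Int.natAbs_dvd.mpr dvd_rfl))
  have hcop : IsCoprime (a : ℤ) ((p : ℤ) ^ n) := by
    refine IsCoprime.pow_right ?_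
    rw [Int.isCoprime_iff_gcd_eq_one]
    have := (Nat.Prime.coprime_iff_not_dvd hp).mpr hnd
    simp [Int.gcd, Nat.coprime_comm.mp this]
  obtain ⟨u, v, huv⟩ := hcop
  refine IsUnit.of_mul_eq_one (u : ZMod (p ^ n)) ?_
  have hcast := congrArg (fun z : ℤ => (z : ZMod (p ^ n))) huv
  push_cast at hcast
  have hz : ((p : ZMod (p ^ n))) ^ n = 0 := by
    have := ZMod.natCast_self (p ^ n)
    push_cast at this
    exact this
  linear_combination hcast - (v : ZMod (p ^ n)) * hz

/-- Let `η ∈ M₂(ℤ)` be primitive with `det η ≠ 0`, and let `K ≥ 1` be an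
integer dividing `det η`. Then the number of `θ ∈ M₂(ℤ/Kℤ)` with
`η·θ ≡ 0 (mod K)` is exactly `K²`. -/
theorem card_right_annihilator_mod_K
    (η : Matrix (Fin 2) (Fin 2) ℤ)
    (hprim : ∀ d : ℤ, (∀ i j, d ∣ η i j) → IsUnit d)
    (hdet : η.det ≠ 0)
    (K : ℕ) (hK : 1 ≤ K) (hKdet : (K : ℤ) ∣ η.det) :
    Nat.card {θ : Matrix (Fin 2) (Fin 2) (ZMod K) //
        (η.map (Int.cast : ℤ → ZMod K)) * θ = 0} = K ^ 2 := by
  suffices H : ∀ N : ℕ, ((N : ℤ) ∣ η.det) →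
      Nat.card {θ : Matrix (Fin 2) (Fin 2) (ZMod N) //
        (η.map (Int.cast : ℤ → ZMod N)) * θ = 0} = N ^ 2 from H K hKdet
  intro N
  induction N using Nat.recOnPosPrimePosCoprime with
  | prime_pow p n hp hn =>
    intro hdvd
    have hex : ∃ i j, IsUnit ((η.map (Int.cast : ℤ → ZMod (p ^ n))) i j) := by
      by_contra hno
      push_neg at hno
      have hdall : ∀ i j, (p : ℤ) ∣ η i j := by
        intro i j
        by_contra hnd
        exact hno i j (isUnit_int_cast_of_not_dvd p hp n _ hnd)
      have hu := hprim (p : ℤ) hdall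
      rw [Int.isUnit_iff] at hu
      have h2 := hp.two_le
      rcases hu with hu | hu <;> omega
    obtain ⟨i, j, hu⟩ := hex
    have hdet0 : (η.map (Int.cast : ℤ → ZMod (p ^ n))).det = 0 := by
      rw [Matrix.det_fin_two]
      have h1 : ((η.det : ℤ) : ZMod (p ^ n)) = 0 := by
        rw [ZMod.intCast_zmod_eq_zero_iff_dvd]
        exact_mod_cast hdvd
      rw [Matrix.det_fin_two] at h1
      push_cast at h1
      simpa [Matrix.map_apply] using h1
    rw [card_matKer _ hdet0 i j hu, Nat.card_zmod]
  | zero =>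
    intro hdvd
    rw [Nat.cast_zero, zero_dvd_iff] at hdvd
    exact (hdet hdvd).elim
  | one =>
    intro _
    haveI : Subsingleton (Matrix (Fin 2) (Fin 2) (ZMod 1)) := by
      unfold Matrix
      infer_instance
    rw [one_pow]
    exact Nat.card_eq_one_iff_unique.mpr
      ⟨⟨fun a b => Subtype.ext (Subsingleton.elim _ _)⟩, ⟨⟨0, by rw [mul_zero]⟩⟩⟩
  | coprime a b ha hb hab iha ihb =>
    intro hdvd
    have hda : ((a : ℕ) : ℤ) ∣ η.det := by
      refine dvd_trans ?_ hdvd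
      push_cast
      exact ⟨b, rfl⟩
    have hdb : ((b : ℕ) : ℤ) ∣ η.det := by
      refine dvd_trans ?_ hdvd
      push_cast
      exact ⟨a, mul_comm _ _⟩
    rw [Nat.card_congr (crtEquiv η a b hab), Nat.card_prod, iha hda, ihb hdb, mul_pow]
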